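/- (Main theorem.) Suppose additionally that N < kmax and that u is uniform with values A > B > C. If a strategy profile s = (s_1, s_2) is Pareto optimal over the subgame T1, then either s is all-office on T1 (s_i(t_i) = o for every arrival pair (t1, t2) ∈ T1 and every i ∈ {1,2}), or s is the cut-off profile with cut-off N on T1 (for every (t1, t2) ∈ T1 and every i ∈ {1,2}, s_i(t_i) = c if and only if t_i < N, i.e., go to the canteen exactly when arriving before 9:00). -/

import Mathlib

/-- The two actions: `c` (canteen) and `o` (office). -/
inductive Act : Type
  | c : Act
  | o : Act
deriving DecidableEq

open Act

/-- The set of arrival pairs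
`T = {(k, k+1) : kmin ≤ k ≤ kmax - 1} ∪ {(k, k-1) : kmin + 1 ≤ k ≤ kmax}`. -/
noncomputable def T (kmin kmax : ℤ) : Finset (ℤ × ℤ) :=
  ((Finset.Icc kmin (kmax - 1)).image (fun k => (k, k + 1))) ∪
  ((Finset.Icc (kmin + 1) kmax).image (fun k => (k, k - 1)))

/-- Subgame `T1 = {(t1,t2) ∈ T : t1 ≡ kmin (mod 2)}`. -/
noncomputable def T1 (kmin kmax : ℤ) : Finset (ℤ × ℤ) :=
  (T kmin kmax).filter (fun t => t.1 % 2 = kmin % 2)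

/-- Subgame `T2 = {(t1,t2) ∈ T : t2 ≡ kmin (mod 2)}`. -/
noncomputable def T2 (kmin kmax : ℤ) : Finset (ℤ × ℤ) :=
  (T kmin kmax).filter (fun t => t.2 % 2 = kmin % 2)

/-- The expected utility of profile `s` over a set `S` of arrival pairs:
`EU_S(s) = (1/|S|) · Σ_{(t1,t2) ∈ S} u_{(t1,t2)}(s_1(t1), s_2(t2))`. -/
noncomputable def EU (u : ℤ × ℤ → Act → Act → ℝ) (s : (ℤ → Act) × (ℤ → Act))
    (S : Finset (ℤ × ℤ)) : ℝ :=
  (∑ t ∈ S, u t (s.1 t.1) (s.2 t.2)) / S.card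

/-- `s` is Pareto optimal over `S` if no profile `s'` has `EU_S(s') > EU_S(s)`. -/
def ParetoOptimal (u : ℤ × ℤ → Act → Act → ℝ) (S : Finset (ℤ × ℤ))
    (s : (ℤ → Act) × (ℤ → Act)) : Prop :=
  ¬ ∃ s' : (ℤ → Act) × (ℤ → Act), EU u s' S > EU u s S

/-- `u` satisfies conditions (U1) and (U2) on the arrival pairs of `T`. -/
def SatisfiesU1U2 (kmin kmax N : ℤ) (u : ℤ × ℤ → Act → Act → ℝ) : Prop :=
  ∀ t ∈ T kmin kmax,
    (t.1 < N ∧ t.2 < N →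
      u t c c > u t o o ∧ u t o o > u t c o ∧ u t c o = u t o c) ∧
    (N ≤ t.1 ∨ N ≤ t.2 →
      u t o o > u t c o ∧ u t c o = u t o c ∧ u t o c = u t c c)

/-- `u` is uniform with values `A > B > C` (the order is assumed separately). -/
def Uniform (kmin kmax N : ℤ) (u : ℤ × ℤ → Act → Act → ℝ) (A B C : ℝ) : Prop :=
  ∀ t ∈ T kmin kmax,
    (t.1 < N ∧ t.2 < N →
      u t c c = A ∧ u t o o = B ∧ u t c o = C ∧ u t o c = C) ∧
    (N ≤ t.1 ∨ N ≤ t.2 →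
      u t o o = B ∧ u t c c = C ∧ u t c o = C ∧ u t o c = C)

/-- The cut-off strategy with cut-off `m`: canteen iff arriving strictly before `m`. -/
def cutoff (m : ℤ) : ℤ → Act := fun k => if k < m then c else o

/-- The all-office strategy. -/
def allOffice : ℤ → Act := fun _ => o

namespace Stmt3Aux

/-- the edge map: edge `k` of the path corresponds to an arrival pair of `T1`. -/
def e (kmin : ℤ) (k : ℤ) : ℤ × ℤ := if k % 2 = kmin % 2 then (k, k + 1) else (k + 1, k)

/-- value of edge k under a pair of actions, for a uniform utility -/
noncomputable def val (N : ℤ) (A B C : ℝ) (k : ℤ) (x y : Act) : ℝ :=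
  if x = c ∧ y = c then (if k + 1 < N then A else C)
  else if x = o ∧ y = o then B else C

/-- merge a profile into a single function on the path's nodes -/
def mg (kmin : ℤ) (s : (ℤ → Act) × (ℤ → Act)) : ℤ → Act :=
  fun k => if k % 2 = kmin % 2 then s.1 k else s.2 k

lemma mg_pair (kmin : ℤ) (f : ℤ → Act) : mg kmin (f, f) = f := by
  funext k; unfold mg; split <;> rfl

lemma T1_eq (kmin kmax : ℤ) :
    T1 kmin kmax = (Finset.Icc kmin (kmax - 1)).image (e kmin) := by
  ext t
  simp only [T1, T, Finset.mem_filter, Finset.mem_union, Finset.mem_image, Finset.mem_Icc]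
  constructor
  · rintro ⟨⟨k, hk, rfl⟩ | ⟨k, hk, rfl⟩, hp⟩
    · exact ⟨k, hk, by simp only [e, if_pos hp]⟩
    · refine ⟨k - 1, ⟨by omega, by omega⟩, ?_⟩
      have hp' : k % 2 = kmin % 2 := hp
      have : ¬ ((k - 1) % 2 = kmin % 2) := by omega
      simp only [e, if_neg this]
      simp only [Prod.mk.injEq, and_true, true_and]
      omega
  · rintro ⟨k, hk, rfl⟩
    by_cases hp : k % 2 = kmin % 2
    · simp only [e, if_pos hp]
      exact ⟨Or.inl ⟨k, hk, rfl⟩, hp⟩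
    · simp only [e, if_neg hp]
      refine ⟨Or.inr ⟨k + 1, ⟨by omega, by omega⟩, by simp only [Prod.mk.injEq, and_true, true_and]; omega⟩, show (k+1) % 2 = kmin % 2 by omega⟩

lemma e_inj (kmin kmax : ℤ) : ∀ x ∈ Finset.Icc kmin (kmax - 1), ∀ y ∈ Finset.Icc kmin (kmax - 1),
    e kmin x = e kmin y → x = y := by
  intro x _ y _ h
  have h2 := congrArg (fun p : ℤ × ℤ => p.1 + p.2) h
  simp only [e] at h2
  split_ifs at h2 <;> simp at h2 <;> omega

lemma e_mem_T (kmin kmax : ℤ) (k : ℤ) (hk : k ∈ Finset.Icc kmin (kmax - 1)) :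
    e kmin k ∈ T kmin kmax := by
  simp only [Finset.mem_Icc] at hk
  simp only [T, Finset.mem_union, Finset.mem_image, Finset.mem_Icc, e]
  split_ifs
  · exact Or.inl ⟨k, by omega, rfl⟩
  · exact Or.inr ⟨k + 1, by omega, by simp only [Prod.mk.injEq, and_true, true_and]; omega⟩

lemma sum_T1 (kmin kmax N : ℤ) (A B C : ℝ) (u : ℤ × ℤ → Act → Act → ℝ)
    (hu : Uniform kmin kmax N u A B C) (s : (ℤ → Act) × (ℤ → Act)) :
    ∑ t ∈ T1 kmin kmax, u t (s.1 t.1) (s.2 t.2)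
      = ∑ k ∈ Finset.Icc kmin (kmax - 1), val N A B C k (mg kmin s k) (mg kmin s (k + 1)) := by
  rw [T1_eq, Finset.sum_image (e_inj kmin kmax)]
  apply Finset.sum_congr rfl
  intro k hk
  have hT := hu (e kmin k) (e_mem_T kmin kmax k hk)
  by_cases hp : k % 2 = kmin % 2
  · have hp' : ¬ ((k + 1) % 2 = kmin % 2) := by omega
    simp only [e, if_pos hp] at hT ⊢
    simp only [mg, if_pos hp, if_neg hp']
    by_cases hN : k + 1 < N
    · obtain ⟨hcc, hoo, hco, hoc⟩ := hT.1 ⟨by omega, hN⟩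
      cases s.1 k <;> cases s.2 (k + 1) <;> simp [val, hN, hcc, hoo, hco, hoc]
    · obtain ⟨hoo, hcc, hco, hoc⟩ := hT.2 (Or.inr (by omega))
      cases s.1 k <;> cases s.2 (k + 1) <;> simp [val, hN, hcc, hoo, hco, hoc]
  · have hp' : (k + 1) % 2 = kmin % 2 := by omega
    simp only [e, if_neg hp] at hT ⊢
    simp only [mg, if_neg hp, if_pos hp']
    by_cases hN : k + 1 < N
    · obtain ⟨hcc, hoo, hco, hoc⟩ := hT.1 ⟨by omega, by omega⟩
      cases s.2 k <;> cases s.1 (k + 1) <;> simp [val, hN, hcc, hoo, hco, hoc]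
    · obtain ⟨hoo, hcc, hco, hoc⟩ := hT.2 (Or.inl (by omega))
      cases s.2 k <;> cases s.1 (k + 1) <;> simp [val, hN, hcc, hoo, hco, hoc]


lemma core (kmin kmax N : ℤ) (h1 : kmin < N) (h3 : N < kmax)
    (A B C : ℝ) (hAB : A > B) (hBC : B > C) (m : ℤ → Act)
    (hS : ∀ f : ℤ → Act,
      ∑ k ∈ Finset.Icc kmin (kmax - 1), val N A B C k (f k) (f (k + 1))
        ≤ ∑ k ∈ Finset.Icc kmin (kmax - 1), val N A B C k (m k) (m (k + 1))) :
    (∀ k ∈ Finset.Icc kmin kmax, m k = o) ∨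
    (∀ k ∈ Finset.Icc kmin kmax, (m k = c ↔ k < N)) := by
  have hval_le_A : ∀ (k : ℤ) (x y : Act), val N A B C k x y ≤ A := by
    intro k x y; unfold val; split_ifs <;> linarith
  -- Step A: any optimal m plays o at all times ≥ N
  have hA : ∀ k, N ≤ k → k ≤ kmax → m k = o := by
    by_contra hcon
    push_neg at hcon
    obtain ⟨k0, hk0N, hk0max, hk0o⟩ := hcon
    have hk0c : m k0 = c := by cases h : m k0 <;> simp_all
    set f : ℤ → Act := fun k => if N ≤ k then o else m k with hf
    have hlt : ∑ k ∈ Finset.Icc kmin (kmax - 1), val N A B C k (m k) (m (k + 1))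
        < ∑ k ∈ Finset.Icc kmin (kmax - 1), val N A B C k (f k) (f (k + 1)) := by
      apply Finset.sum_lt_sum
      · intro i hi
        simp only [Finset.mem_Icc] at hi
        by_cases h2 : i + 1 < N
        · have e1 : f i = m i := if_neg (by omega)
          have e2 : f (i + 1) = m (i + 1) := if_neg (by omega)
          rw [e1, e2]
        · have e2 : f (i + 1) = o := if_pos (by omega)
          rw [e2]
          by_cases h4 : N ≤ i
          · have e1 : f i = o := if_pos h4
            rw [e1]
            cases hx : m i <;> cases hy : m (i + 1) <;> simp [val, h2] <;> linarith
          · have e1 : f i = m i := if_neg h4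
            rw [e1]
            cases hx : m i <;> cases hy : m (i + 1) <;> simp [val, h2] <;> linarith
      · by_cases hk0 : k0 = N
        · refine ⟨N, Finset.mem_Icc.mpr ⟨by omega, by omega⟩, ?_⟩
          have e1 : f N = o := if_pos le_rfl
          have e2 : f (N + 1) = o := if_pos (by omega)
          rw [e1, e2]
          have hmN : m N = c := by rw [← hk0]; exact hk0c
          rw [hmN]
          cases hy : m (N + 1) <;> simp [val, show ¬(N + 1 < N) by omega] <;> linarith
        · refine ⟨k0 - 1, Finset.mem_Icc.mpr ⟨by omega, by omega⟩, ?_⟩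
          have e1 : f (k0 - 1) = o := if_pos (by omega)
          have e2 : f (k0 - 1 + 1) = o := if_pos (by omega)
          rw [e1, e2]
          have e3 : k0 - 1 + 1 = k0 := by ring
          rw [e3, hk0c]
          cases hx : m (k0 - 1) <;> simp [val, show ¬(k0 < N) by omega] <;> linarith
    exact absurd (hS f) (by linarith)
  -- Step B
  by_cases hallo : ∀ k ∈ Finset.Icc kmin (N - 1), m k = o
  · left
    intro k hk
    simp only [Finset.mem_Icc] at hk
    by_cases hkN : k < N
    · exact hallo k (Finset.mem_Icc.mpr ⟨hk.1, by omega⟩)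
    · exact hA k (by omega) hk.2
  · by_cases hallc : ∀ k ∈ Finset.Icc kmin (N - 1), m k = c
    · right
      intro k hk
      simp only [Finset.mem_Icc] at hk
      by_cases hkN : k < N
      · simp [hallc k (Finset.mem_Icc.mpr ⟨hk.1, by omega⟩), hkN]
      · simp [hA k (by omega) hk.2, hkN]
    · exfalso
      push_neg at hallo hallc
      obtain ⟨kc, hkc, hkc'⟩ := hallo
      obtain ⟨ko, hko, hko'⟩ := hallc
      simp only [Finset.mem_Icc] at hkc hko
      have hmc : m kc = c := by cases h : m kc <;> simp_all
      have hmo : m ko = o := by cases h : m ko <;> simp_all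
      -- there is a transition edge inside [kmin, N-2]
      have htrans : ∃ j, kmin ≤ j ∧ j ≤ N - 2 ∧ m j ≠ m (j + 1) := by
        by_contra hno
        push_neg at hno
        have hconst : ∀ x, kmin ≤ x → x ≤ N - 1 → m x = m kmin := by
          have hnat : ∀ n : ℕ, ∀ x, x = kmin + n → x ≤ N - 1 → m x = m kmin := by
            intro n
            induction n with
            | zero =>
              intro x hx _
              have hx' : x = kmin := by omega
              rw [hx']
            | succ p ih =>
              intro x hx hxN
              have h7 := hno (x - 1) (by omega) (by omega)
              have h8 : x - 1 + 1 = x := by omega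
              rw [h8] at h7
              rw [← h7]
              exact ih (x - 1) (by omega) (by omega)
          intro x hx1 hx2
          exact hnat (x - kmin).toNat x (by omega) hx2
        have h5 := hconst kc hkc.1 hkc.2
        have h6 := hconst ko hko.1 hko.2
        rw [hmc] at h5; rw [hmo] at h6
        rw [← h5] at h6
        exact Act.noConfusion h6
      obtain ⟨j, hj1, hj2, hj3⟩ := htrans
      set ct : ℤ → Act := fun k => if k < N then c else o with hct
      have hle := hS ct
      set s := Finset.Icc kmin (kmax - 1) with hs
      set d : ℤ → ℝ := fun k =>
        val N A B C k (ct k) (ct (k + 1)) - val N A B C k (m k) (m (k + 1)) with hd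
      have hNmem : N - 1 ∈ s := Finset.mem_Icc.mpr ⟨by omega, by omega⟩
      have hjmem : j ∈ s.erase (N - 1) :=
        Finset.mem_erase.mpr ⟨by omega, Finset.mem_Icc.mpr ⟨hj1, by omega⟩⟩
      -- d is nonnegative away from N-1
      have hdpos : ∀ i ∈ s.erase (N - 1), 0 ≤ d i := by
        intro i hi
        obtain ⟨hine, hi'⟩ := Finset.mem_erase.mp hi
        rw [hs] at hi'
        simp only [Finset.mem_Icc] at hi'
        by_cases h2 : i + 1 < N
        · have e1 : ct i = c := if_pos (by omega)
          have e2 : ct (i + 1) = c := if_pos h2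
          have : val N A B C i (ct i) (ct (i + 1)) = A := by
            rw [e1, e2]; simp [val, h2]
          simp only [hd]
          rw [this]
          have := hval_le_A i (m i) (m (i + 1))
          linarith
        · have hiN : N ≤ i := by omega
          have e1 : ct i = o := if_neg (by omega)
          have e2 : ct (i + 1) = o := if_neg (by omega)
          have e3 : m i = o := hA i hiN (by omega)
          have e4 : m (i + 1) = o := hA (i + 1) (by omega) (by omega)
          simp only [hd]
          rw [e1, e2, e3, e4]
          exact sub_nonneg.mpr le_rfl
      -- at the transition edge the gain is at least A - C
      have hdj : A - C ≤ d j := by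
        have e1 : ct j = c := if_pos (by omega)
        have e2 : ct (j + 1) = c := if_pos (by omega)
        have hcj : val N A B C j (ct j) (ct (j + 1)) = A := by
          rw [e1, e2]; simp [val, show j + 1 < N by omega]
        have hmj : val N A B C j (m j) (m (j + 1)) = C := by
          cases hx : m j <;> cases hy : m (j + 1) <;> simp_all [val]
        simp only [hd]
        rw [hcj, hmj]
      -- at the boundary edge the loss is at most B - C
      have hdN : C - B ≤ d (N - 1) := by
        have e1 : ct (N - 1) = c := if_pos (by omega)
        have e2 : ct (N - 1 + 1) = o := if_neg (by omega)
        have hcb : val N A B C (N - 1) (ct (N - 1)) (ct (N - 1 + 1)) = C := by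
          rw [e1, e2]; simp [val]
        have e3 : m (N - 1 + 1) = o := hA (N - 1 + 1) (by omega) (by omega)
        have hmb : val N A B C (N - 1) (m (N - 1)) (m (N - 1 + 1)) ≤ B := by
          rw [e3]
          cases hx : m (N - 1) <;> simp [val] <;> linarith
        simp only [hd]
        linarith
      have hsum : ∑ k ∈ s, d k
          = ∑ k ∈ s, val N A B C k (ct k) (ct (k + 1))
            - ∑ k ∈ s, val N A B C k (m k) (m (k + 1)) := by
        simp only [hd]
        rw [Finset.sum_sub_distrib]
      have hsplit : ∑ k ∈ s, d k = d (N - 1) + ∑ k ∈ s.erase (N - 1), d k :=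
        (Finset.add_sum_erase s d hNmem).symm
      have hrest : d j ≤ ∑ k ∈ s.erase (N - 1), d k :=
        Finset.single_le_sum hdpos hjmem
      have : 0 < ∑ k ∈ s, d k := by
        rw [hsplit]
        have : A - B ≤ d (N - 1) + d j := by linarith
        nlinarith [hrest, hdj, hdN]
      rw [hsum] at this
      linarith

end Stmt3Aux

open Stmt3Aux in
/-- Main theorem: With a uniform utility with values `A > B > C`, any
profile Pareto optimal over the subgame `T1` is either all-office on `T1` or the
cut-off profile with cut-off `N` on `T1`. -/
theorem stmt_3 (kmin kmax N : ℤ) (h1 : kmin < N) (h2 : N ≤ kmax) (h3 : N < kmax)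
    (A B C : ℝ) (hAB : A > B) (hBC : B > C)
    (u : ℤ × ℤ → Act → Act → ℝ) (hu : Uniform kmin kmax N u A B C)
    (s : (ℤ → Act) × (ℤ → Act))
    (hpo : ParetoOptimal u (T1 kmin kmax) s) :
    (∀ t ∈ T1 kmin kmax, s.1 t.1 = Act.o ∧ s.2 t.2 = Act.o) ∨
    (∀ t ∈ T1 kmin kmax,
      (s.1 t.1 = Act.c ↔ t.1 < N) ∧ (s.2 t.2 = Act.c ↔ t.2 < N)) := by
  classical
  have hsum : ∀ s' : (ℤ → Act) × (ℤ → Act),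
      ∑ t ∈ T1 kmin kmax, u t (s'.1 t.1) (s'.2 t.2)
        = ∑ k ∈ Finset.Icc kmin (kmax - 1),
            val N A B C k (mg kmin s' k) (mg kmin s' (k + 1)) :=
    fun s' => sum_T1 kmin kmax N A B C u hu s'
  have hne : (T1 kmin kmax).Nonempty := by
    rw [T1_eq]
    exact ⟨_, Finset.mem_image_of_mem _ (Finset.mem_Icc.mpr ⟨le_rfl, by omega⟩ :
      kmin ∈ Finset.Icc kmin (kmax - 1))⟩
  have hcard : (0 : ℝ) < ((T1 kmin kmax).card : ℝ) := by
    exact_mod_cast Finset.card_pos.mpr hne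
  have hS : ∀ f : ℤ → Act,
      ∑ k ∈ Finset.Icc kmin (kmax - 1), val N A B C k (f k) (f (k + 1))
        ≤ ∑ k ∈ Finset.Icc kmin (kmax - 1),
            val N A B C k (mg kmin s k) (mg kmin s (k + 1)) := by
    intro f
    by_contra hcon
    push_neg at hcon
    apply hpo
    refine ⟨(f, f), ?_⟩
    show EU u (f, f) (T1 kmin kmax) > EU u s (T1 kmin kmax)
    unfold EU
    rw [hsum (f, f), hsum s, mg_pair]
    gcongr
  have hcore := core kmin kmax N h1 h3 A B C hAB hBC (mg kmin s) hS
  have hmem : ∀ t ∈ T1 kmin kmax,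
      (t.1 ∈ Finset.Icc kmin kmax ∧ t.2 ∈ Finset.Icc kmin kmax) ∧
        s.1 t.1 = mg kmin s t.1 ∧ s.2 t.2 = mg kmin s t.2 := by
    intro t ht
    rw [T1_eq] at ht
    obtain ⟨k, hk, rfl⟩ := Finset.mem_image.mp ht
    rw [Finset.mem_Icc] at hk
    by_cases hp : k % 2 = kmin % 2
    · have he : e kmin k = (k, k + 1) := if_pos hp
      rw [he]
      have hp' : ¬((k + 1) % 2 = kmin % 2) := by omega
      refine ⟨⟨Finset.mem_Icc.mpr ⟨by omega, by omega⟩,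
        Finset.mem_Icc.mpr ⟨by omega, by omega⟩⟩, ?_, ?_⟩
      · exact (if_pos hp).symm
      · exact (if_neg hp').symm
    · have he : e kmin k = (k + 1, k) := if_neg hp
      rw [he]
      have hp' : (k + 1) % 2 = kmin % 2 := by omega
      refine ⟨⟨Finset.mem_Icc.mpr ⟨by omega, by omega⟩,
        Finset.mem_Icc.mpr ⟨by omega, by omega⟩⟩, ?_, ?_⟩
      · exact (if_pos hp').symm
      · exact (if_neg hp).symm
  rcases hcore with h | h
  · left
    intro t ht
    obtain ⟨⟨m1, m2⟩, e1, e2⟩ := hmem t ht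
    exact ⟨e1.trans (h _ m1), e2.trans (h _ m2)⟩
  · right
    intro t ht
    obtain ⟨⟨m1, m2⟩, e1, e2⟩ := hmem t ht
    rw [e1, e2]
    exact ⟨h _ m1, h _ m2⟩
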